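/- With T, H, A defined by the splitting recursion and ρ a spectral gap for α, for every k with 1 ≤ k ≤ r one has ‖H k‖ ≤ ∑_{l=1}^{k−1} (1/ρ)(‖B l‖ + ‖H l‖)(2‖B (k−l)‖ + ‖H (k−l)‖). -/

import Mathlib

attribute [local instance] Matrix.linftyOpNormedAddCommGroup

section aux

variable {p : ℕ}

lemma rowsum_le_linfty (M : Matrix (Fin p) (Fin p) ℂ) (i : Fin p) :
    ∑ j, ‖M i j‖ ≤ ‖M‖ := by
  rw [Matrix.linfty_opNorm_def]
  have : (∑ j, ‖M i j‖₊ : NNReal) ≤ Finset.univ.sup fun i => ∑ j, ‖M i j‖₊ :=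
    Finset.le_sup (f := fun i => ∑ j, ‖M i j‖₊) (Finset.mem_univ i)
  calc ∑ j, ‖M i j‖ = ((∑ j, ‖M i j‖₊ : NNReal) : ℝ) := by push_cast; rfl
    _ ≤ _ := by exact_mod_cast this

lemma linfty_le_of_rowsum (M : Matrix (Fin p) (Fin p) ℂ) (c : ℝ) (hc : 0 ≤ c)
    (h : ∀ i, ∑ j, ‖M i j‖ ≤ c) : ‖M‖ ≤ c := by
  have key : ‖M‖₊ ≤ (⟨c, hc⟩ : NNReal) := by
    rw [Matrix.linfty_opNNNorm_def]
    refine Finset.sup_le fun i _ => ?_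
    have := h i
    refine NNReal.coe_le_coe.1 ?_
    push_cast
    exact this
  exact_mod_cast key

lemma entry_le_linfty (M : Matrix (Fin p) (Fin p) ℂ) (i j : Fin p) :
    ‖M i j‖ ≤ ‖M‖ :=
  le_trans (Finset.single_le_sum (f := fun j => ‖M i j‖) (fun _ _ => norm_nonneg _)
    (Finset.mem_univ j)) (rowsum_le_linfty M i)

end aux

/-- norm recursion bound for the matrices `H k` of the splitting recursion. -/
theorem splitting_recursion_H_bound
    (p r : ℕ) (hp : 1 ≤ p) (hr : 1 ≤ r)
    (α : Fin p → ℂ) (hα : Function.Injective α)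
    (ρ : ℝ) (hρ : 0 < ρ)
    (hgap : ∀ i j : Fin p, i ≠ j → ρ ≤ ‖α i - α j‖)
    (B T H A : ℕ → Matrix (Fin p) (Fin p) ℂ)
    (hB0 : B 0 = Matrix.diagonal α)
    (hT0 : T 0 = 1) (hH0 : H 0 = 0) (hA0 : A 0 = B 0)
    (hH : ∀ k, 1 ≤ k → H k =
      (∑ l ∈ Finset.Ico 1 k, (T l * A (k - l) - B (k - l) * T l)) +
        (if r < k then ((k - r : ℕ) : ℂ) • T (k - r) else 0))
    (hA : ∀ k, 1 ≤ k → A k = Matrix.diagonal fun j => (B k - H k) j j)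
    (hT : ∀ k, 1 ≤ k → ∀ i j : Fin p,
      T k i j = if i = j then 0 else (B k - H k) i j / (α j - α i)) :
    ∀ k, 1 ≤ k → k ≤ r →
      ‖H k‖ ≤ ∑ l ∈ Finset.Ico 1 k,
        (1 / ρ) * (‖B l‖ + ‖H l‖) * (2 * ‖B (k - l)‖ + ‖H (k - l)‖) := by
  -- bound on T
  have hTbound : ∀ k, 1 ≤ k → ‖T k‖ ≤ (1 / ρ) * (‖B k‖ + ‖H k‖) := by
    intro k hk
    have hBH : ‖B k - H k‖ ≤ ‖B k‖ + ‖H k‖ := norm_sub_le _ _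
    refine linfty_le_of_rowsum _ _ (by positivity) fun i => ?_
    calc ∑ j, ‖T k i j‖ ≤ ∑ j, (1 / ρ) * ‖(B k - H k) i j‖ := by
          refine Finset.sum_le_sum fun j _ => ?_
          rw [hT k hk i j]
          by_cases hij : i = j
          · simp [hij]; positivity
          · simp only [hij, if_false]
            rw [norm_div]
            have hρ' : ρ ≤ ‖α j - α i‖ := by
              simpa using hgap j i (Ne.symm hij)
            calc ‖(B k - H k) i j‖ / ‖α j - α i‖
                ≤ ‖(B k - H k) i j‖ / ρ := by gcongr
              _ = 1 / ρ * ‖(B k - H k) i j‖ := by ring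
      _ = (1 / ρ) * ∑ j, ‖(B k - H k) i j‖ := by rw [Finset.mul_sum]
      _ ≤ (1 / ρ) * ‖B k - H k‖ := by
            refine mul_le_mul_of_nonneg_left (rowsum_le_linfty _ i) (by positivity)
      _ ≤ (1 / ρ) * (‖B k‖ + ‖H k‖) := by
            exact mul_le_mul_of_nonneg_left hBH (by positivity)
  -- bound on A
  have hAbound : ∀ k, 1 ≤ k → ‖A k‖ ≤ ‖B k‖ + ‖H k‖ := by
    intro k hk
    rw [hA k hk, Matrix.linfty_opNorm_diagonal]
    refine (pi_norm_le_iff_of_nonneg (by positivity)).2 fun j => ?_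
    exact le_trans (entry_le_linfty (B k - H k) j j) (norm_sub_le _ _)
  intro k hk hkr
  rw [hH k hk, if_neg (not_lt.2 hkr), add_zero]
  refine le_trans (norm_sum_le _ _) (Finset.sum_le_sum fun l hl => ?_)
  obtain ⟨hl1, hlk⟩ := Finset.mem_Ico.1 hl
  have hkl1 : 1 ≤ k - l := by omega
  have hTl := hTbound l hl1
  have hTnn : (0:ℝ) ≤ ‖T l‖ := norm_nonneg _
  calc ‖T l * A (k - l) - B (k - l) * T l‖
      ≤ ‖T l * A (k - l)‖ + ‖B (k - l) * T l‖ := norm_sub_le _ _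
    _ ≤ ‖T l‖ * ‖A (k - l)‖ + ‖B (k - l)‖ * ‖T l‖ := by
        gcongr <;> [exact Matrix.linfty_opNorm_mul _ _; exact Matrix.linfty_opNorm_mul _ _]
    _ = ‖T l‖ * (‖A (k - l)‖ + ‖B (k - l)‖) := by ring
    _ ≤ ((1/ρ) * (‖B l‖ + ‖H l‖)) * (2 * ‖B (k - l)‖ + ‖H (k - l)‖) := by
        refine mul_le_mul hTl ?_ (by positivity) (by positivity)
        have := hAbound (k - l) hkl1
        linarith
    _ = (1 / ρ) * (‖B l‖ + ‖H l‖) * (2 * ‖B (k - l)‖ + ‖H (k - l)‖) := by ring
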